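/- arXiv:1206.4979 — 5 statements merged into one kernel-verified Lean document; each statement's English description precedes it below -/
import Mathlib

section
/- Let K be a field, f, g ∈ K[X], and let β be a root of g in an algebraic closure of K. Then g∘f is irreducible over K if and only if both g is irreducible over K and f − β is irreducible over K(β). -/
set_option maxHeartbeats 1000000

open Polynomial IntermediateField

lemma irred_iff_deg {F E : Type*} [Field F] [Field E] [Algebra F E]
    {p : F[X]} {x : E} (hdeg : 1 ≤ p.natDegree) (hx : Polynomial.aeval x p = 0) :
    Irreducible p ↔ p.natDegree = (minpoly F x).natDegree := by
  have hp0 : p ≠ 0 := fun h => by simp [h] at hdeg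
  have hint : IsIntegral F x := IsAlgebraic.isIntegral ⟨p, hp0, hx⟩
  constructor
  · intro hirr
    have h := minpoly.eq_of_irreducible hirr hx
    have hc : (C p.leadingCoeff⁻¹) ≠ 0 := by
      simp [leadingCoeff_ne_zero.mpr hp0]
    rw [← h, natDegree_mul hp0 hc, natDegree_C]; ring
  · intro h
    exact ((associated_of_dvd_of_natDegree_le (minpoly.dvd F x hx) hp0 h.le).irreducible
      (minpoly.irreducible hint))

/-- Capelli's lemma: for f, g ∈ K[X] and β a root of g in an algebraic closure,
g∘f is irreducible over K iff g is irreducible over K and f − β is irreducible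
over K(β). -/
theorem capelli {K : Type*} [Field K] (f g : K[X])
    (hf : 1 ≤ f.natDegree) (hg : 1 ≤ g.natDegree)
    (β : AlgebraicClosure K) (hβ : Polynomial.aeval β g = 0) :
    Irreducible (g.comp f) ↔
      Irreducible g ∧
        Irreducible
          (f.map (algebraMap K (IntermediateField.adjoin K {β})) -
            Polynomial.C ⟨β, IntermediateField.mem_adjoin_simple_self K β⟩) := by
  set L := IntermediateField.adjoin K {β} with hL
  set b : L := ⟨β, IntermediateField.mem_adjoin_simple_self K β⟩ with hb
  set f' : L[X] := f.map (algebraMap K L) - C b with hf'def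
  have hf'deg : f'.natDegree = f.natDegree := by
    rw [hf'def, natDegree_sub_C, natDegree_map]
  have hf'deg1 : 1 ≤ f'.natDegree := hf'deg ▸ hf
  have hf'0 : f' ≠ 0 := fun h => by simp [h] at hf'deg1
  have hg0 : g ≠ 0 := fun h => by simp [h] at hg
  obtain ⟨α, hα⟩ : ∃ α : AlgebraicClosure K, Polynomial.aeval α f' = 0 := by
    apply IsAlgClosed.exists_aeval_eq_zero
    have hne : (f'.natDegree : WithBot ℕ) ≠ 0 := by
      exact_mod_cast Nat.one_le_iff_ne_zero.mp hf'deg1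
    rw [degree_eq_natDegree hf'0]
    exact hne
  have hfα : Polynomial.aeval α f = β := by
    have h2 : Polynomial.aeval α f - β = 0 := by
      have := hα
      rw [hf'def, map_sub, aeval_C, aeval_map_algebraMap] at this
      exact this
    exact sub_eq_zero.mp h2
  have hroot : Polynomial.aeval α (g.comp f) = 0 := by rw [aeval_comp, hfα, hβ]
  have hintα : IsIntegral K α := Algebra.IsIntegral.isIntegral α
  have hintβ : IsIntegral K β := Algebra.IsIntegral.isIntegral β
  have hintLα : IsIntegral L α := hintα.tower_top
  -- β ∈ K⟮α⟯
  have hβmem : β ∈ IntermediateField.adjoin K {α} := by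
    rw [← hfα]
    exact IntermediateField.algebra_adjoin_le_adjoin K {α}
      (aeval_mem_adjoin_singleton K α)
  have hsets : IntermediateField.adjoin K ({β} ∪ {α}) = IntermediateField.adjoin K {α} := by
    apply le_antisymm
    · rw [IntermediateField.adjoin_le_iff]
      rintro x hx
      rcases hx with hx | hx
      · rw [Set.mem_singleton_iff] at hx; rw [hx]; exact hβmem
      · rw [Set.mem_singleton_iff] at hx; rw [hx]
        exact IntermediateField.mem_adjoin_simple_self K α
    · exact IntermediateField.adjoin.mono K _ _ Set.subset_union_right
  have key : (minpoly K α).natDegree = (minpoly K β).natDegree * (minpoly L α).natDegree := by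
    have hfd1 : FiniteDimensional K L := IntermediateField.adjoin.finiteDimensional hintβ
    have hfd2 : FiniteDimensional L (IntermediateField.adjoin L {α}) :=
      IntermediateField.adjoin.finiteDimensional hintLα
    have tower : Module.finrank K L * Module.finrank L (IntermediateField.adjoin L {α})
        = Module.finrank K (IntermediateField.adjoin L {α}) :=
      Module.finrank_mul_finrank K L (IntermediateField.adjoin L {α})
    have hrs : ((IntermediateField.adjoin L {α}).restrictScalars K) =
        IntermediateField.adjoin K {α} := by
      rw [IntermediateField.adjoin_adjoin_left, hsets]
    have hre : Module.finrank K (IntermediateField.adjoin L {α})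
        = Module.finrank K (IntermediateField.adjoin K {α}) := by
      rw [← hrs]; rfl
    rw [← IntermediateField.adjoin.finrank hintα, ← IntermediateField.adjoin.finrank hintβ,
      ← IntermediateField.adjoin.finrank hintLα, ← hre, ← tower]
  have hcompdeg : 1 ≤ (g.comp f).natDegree := by
    rw [natDegree_comp]; exact Nat.one_le_iff_ne_zero.mpr (by positivity)
  rw [irred_iff_deg hcompdeg hroot, irred_iff_deg hg hβ, irred_iff_deg hf'deg1 hα,
    natDegree_comp, key, hf'deg]
  have hA : (minpoly K β).natDegree ≤ g.natDegree :=
    natDegree_le_of_dvd (minpoly.dvd K β hβ) hg0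
  have hB : (minpoly L α).natDegree ≤ f.natDegree :=
    hf'deg ▸ natDegree_le_of_dvd (minpoly.dvd L α hα) hf'0
  have hA1 : 0 < (minpoly K β).natDegree := minpoly.natDegree_pos hintβ
  have hB1 : 0 < (minpoly L α).natDegree := minpoly.natDegree_pos hintLα
  constructor
  · intro h
    have h3 : (minpoly K β).natDegree * f.natDegree
        = (minpoly K β).natDegree * (minpoly L α).natDegree := by
      apply le_antisymm
      · calc (minpoly K β).natDegree * f.natDegree
            ≤ g.natDegree * f.natDegree := by gcongr
          _ = (minpoly K β).natDegree * (minpoly L α).natDegree := h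
      · gcongr
    have hdf : f.natDegree = (minpoly L α).natDegree :=
      Nat.eq_of_mul_eq_mul_left hA1 h3
    refine ⟨?_, hdf⟩
    have h4 : g.natDegree * (minpoly L α).natDegree
        = (minpoly K β).natDegree * (minpoly L α).natDegree := by
      rw [hdf] at h; exact h
    exact Nat.eq_of_mul_eq_mul_right hB1 h4
  · rintro ⟨h1, h2⟩; rw [h1, h2]
end

section
/- Let q = p^s and f(X) = X^p − a₁X − a₀ ∈ F_q[X] with a₁·a₀ ≠ 0. Then f is irreducible over F_q if and only if there exists b ∈ F_q with a₁ = b^{p−1} and Tr_{F_q/F_p}(a₀/b^p) ≠ 0. -/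
open Polynomial

/-- If `g : A →+* K` is injective from a finite ring with `2 ≤ card A`, every `g a` is a root
of `X ^ card A - X`, and `x ^ card A = x`, then `x` is in the range of `g`. -/
lemma asl_mem_range_of_pow_eq {A K : Type*} [CommRing A] [Fintype A] [Field K]
    [DecidableEq K] (g : A →+* K) (hg : Function.Injective g)
    (h2 : 2 ≤ Fintype.card A)
    (h : ∀ a : A, g a ^ Fintype.card A = g a)
    {x : K} (hx : x ^ Fintype.card A = x) : ∃ a, g a = x := by
  by_contra hcon
  push_neg at hcon
  set n := Fintype.card A with hn
  have hP : (X ^ n - X : K[X]).natDegree = n := by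
    rw [natDegree_sub_eq_left_of_natDegree_lt] <;> simp [natDegree_X_pow]; omega
  have hP0 : (X ^ n - X : K[X]) ≠ 0 := by
    intro h0
    rw [h0] at hP
    simp at hP; omega
  have hroot : ∀ y : K, y ^ n = y → y ∈ (X ^ n - X : K[X]).roots.toFinset := by
    intro y hy
    simp only [Multiset.mem_toFinset, mem_roots hP0, IsRoot.def, eval_sub, eval_pow, eval_X]
    exact sub_eq_zero_of_eq hy
  have hsub : insert x (Finset.univ.image g) ⊆ (X ^ n - X : K[X]).roots.toFinset := by
    intro y hy
    rcases Finset.mem_insert.1 hy with rfl | hy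
    · exact hroot _ hx
    · obtain ⟨a, -, rfl⟩ := Finset.mem_image.1 hy
      exact hroot _ (h a)
  have hcard : n + 1 ≤ (X ^ n - X : K[X]).roots.toFinset.card := by
    have hx' : x ∉ Finset.univ.image g := by
      simp only [Finset.mem_image]
      rintro ⟨a, -, ha⟩
      exact hcon a ha
    calc n + 1 = (insert x (Finset.univ.image g)).card := by
          rw [Finset.card_insert_of_notMem hx', Finset.card_image_of_injective _ hg,
            Finset.card_univ]
      _ ≤ _ := Finset.card_le_card hsub
  have := (Multiset.toFinset_card_le _).trans ((X ^ n - X : K[X]).card_roots')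
  omega

section AuxiliaryLemmas

variable (p : ℕ) [Fact p.Prime] {F : Type*} [Field F] [Fintype F] [Algebra (ZMod p) F]

lemma asl_charP : CharP F p :=
  charP_of_injective_algebraMap (algebraMap (ZMod p) F).injective p

/-- Frobenius invariance of the trace to the prime field. -/

lemma asl_trace_frob (x : F) :
    Algebra.trace (ZMod p) F (x ^ p) = Algebra.trace (ZMod p) F x := by
  haveI := asl_charP p (F := F)
  let φ : F →ₗ[ZMod p] F :=
    { toFun := fun y => y ^ p
      map_add' := fun y z => add_pow_char y z p
      map_smul' := fun c y => by
        simp only [Algebra.smul_def, mul_pow, RingHom.id_apply, ← map_pow, ZMod.pow_card] }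
  have hφinj : Function.Injective φ := fun y z h => by
    have : (frobenius F p) y = (frobenius F p) z := h
    exact (frobenius F p).injective this
  have hφbij : Function.Bijective φ := Finite.injective_iff_bijective.1 hφinj
  let e : F ≃ₗ[ZMod p] F := LinearEquiv.ofBijective φ hφbij
  have key : (Algebra.lmul (ZMod p) F) (x ^ p) = e.conj ((Algebra.lmul (ZMod p) F) x) := by
    ext y
    have hy : (e.symm y) ^ p = y := e.apply_symm_apply y
    simp only [LinearEquiv.conj_apply, LinearMap.coe_comp, Function.comp_apply,
      LinearEquiv.coe_coe]
    show x ^ p * y = e (x * e.symm y)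
    show x ^ p * y = (x * e.symm y) ^ p
    rw [mul_pow, hy]
  rw [Algebra.trace_apply, Algebra.trace_apply, key, LinearMap.trace_conj']

/-- The trace to the prime field is surjective. -/

lemma asl_trace_surjective : Function.Surjective (Algebra.trace (ZMod p) F) := by
  haveI := asl_charP p (F := F)
  have hchar : ringChar F = p := (CharP.ringChar_of_prime_eq_zero (by
    exact (Fact.out : p.Prime)) (CharP.cast_eq_zero F p))
  obtain ⟨b₀, hb₀⟩ : ∃ b₀ : F, Algebra.trace (ZMod p) F b₀ ≠ 0 := by
    subst hchar
    obtain ⟨b₀, hb₀⟩ := FiniteField.trace_to_zmod_nondegenerate F (one_ne_zero (α := F))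
    exact ⟨b₀, by simpa using hb₀⟩
  intro t
  refine ⟨(t * (Algebra.trace (ZMod p) F b₀)⁻¹) • b₀, ?_⟩
  rw [map_smul, smul_eq_mul, mul_assoc, inv_mul_cancel₀ hb₀, mul_one]

lemma asl_exists_pow_sub_eq {c : F} (hc : Algebra.trace (ZMod p) F c = 0) :
    ∃ y : F, y ^ p - y = c := by
  haveI := asl_charP p (F := F)
  classical
  have hp2 : 2 ≤ p := (Fact.out : p.Prime).two_le
  let L : F →ₗ[ZMod p] F :=
    { toFun := fun x => x ^ p - x
      map_add' := fun x y => by show (x+y)^p-(x+y) = (x^p-x)+(y^p-y); rw [add_pow_char x y p]; ring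
      map_smul' := fun k x => by
        show (k • x) ^ p - k • x = k • (x ^ p - x)
        simp only [Algebra.smul_def, mul_pow, ← map_pow, ZMod.pow_card]
        ring }
  have hL : ∀ x, L x = x ^ p - x := fun _ => rfl
  set T : F →ₗ[ZMod p] ZMod p := Algebra.trace (ZMod p) F with hT
  -- range L ≤ ker T
  have hle : LinearMap.range L ≤ LinearMap.ker T := by
    rintro _ ⟨x, rfl⟩
    simp only [LinearMap.mem_ker, hL, map_sub, hT]
    rw [asl_trace_frob p x, sub_self]
  -- ker L = range of algebraMap
  have hkerL : LinearMap.ker L = LinearMap.range (Algebra.linearMap (ZMod p) F) := by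
    ext x
    simp only [LinearMap.mem_ker, hL, LinearMap.mem_range, Algebra.linearMap_apply, sub_eq_zero]
    constructor
    · intro hx
      have := asl_mem_range_of_pow_eq (algebraMap (ZMod p) F)
        (algebraMap (ZMod p) F).injective (by rwa [ZMod.card])
        (fun a => by rw [show Fintype.card (ZMod p) = p from ZMod.card p, ← map_pow, ZMod.pow_card]) (x := x) (by rwa [ZMod.card])
      exact this
    · rintro ⟨a, rfl⟩
      rw [← map_pow, ZMod.pow_card]
  have hfinkerL : Module.finrank (ZMod p) (LinearMap.ker L) = 1 := by
    rw [hkerL, LinearMap.finrank_range_of_inj (algebraMap (ZMod p) F).injective,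
      Module.finrank_self]
  have hfinkerT : Module.finrank (ZMod p) (LinearMap.ker T)
      = Module.finrank (ZMod p) F - 1 := by
    have h1 := LinearMap.finrank_range_add_finrank_ker T
    rw [LinearMap.range_eq_top.2 (asl_trace_surjective p), finrank_top,
      Module.finrank_self] at h1
    omega
  have hfinrangeL : Module.finrank (ZMod p) (LinearMap.range L)
      = Module.finrank (ZMod p) F - 1 := by
    have h1 := LinearMap.finrank_range_add_finrank_ker L
    rw [hfinkerL] at h1
    omega
  have heq : LinearMap.range L = LinearMap.ker T :=
    Submodule.eq_of_le_of_finrank_eq hle (by rw [hfinrangeL, hfinkerT])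
  have : c ∈ LinearMap.range L := heq ▸ hc
  obtain ⟨y, hy⟩ := this
  exact ⟨y, hy⟩

lemma asl_root_iff {a₀ a₁ b : F} (hb0 : b ≠ 0) (hb : a₁ = b ^ (p - 1)) :
    (∃ r : F, r ^ p = a₁ * r + a₀) ↔ Algebra.trace (ZMod p) F (a₀ / b ^ p) = 0 := by
  have hp0 : p ≠ 0 := (Fact.out : p.Prime).ne_zero
  have hbp : b ^ p ≠ 0 := pow_ne_zero _ hb0
  have hbb : b ^ (p - 1) * b = b ^ p := pow_sub_one_mul hp0 b
  constructor
  · rintro ⟨r, hr⟩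
    have hy : (r / b) ^ p - r / b = a₀ / b ^ p := by
      rw [hb] at hr
      rw [div_pow, hr, div_sub_div _ _ hbp hb0,
        div_eq_div_iff (mul_ne_zero hbp hb0) hbp]
      linear_combination (r * b ^ p) * hbb
    rw [← hy, map_sub, asl_trace_frob p (r / b), sub_self]
  · intro hc
    obtain ⟨y, hy⟩ := asl_exists_pow_sub_eq p hc
    refine ⟨b * y, ?_⟩
    have : (b * y) ^ p = b ^ p * y ^ p := mul_pow b y p
    rw [this, hb]
    have h2 : y ^ p = y + a₀ / b ^ p := by rw [← hy]; ring
    rw [h2, mul_add, mul_div_cancel₀ _ hbp, ← mul_assoc, hbb]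

lemma asl_monic (a₀ a₁ : F) : (X ^ p - C a₁ * X - C a₀).Monic := by
  have hp2 : 2 ≤ p := (Fact.out : p.Prime).two_le
  monicity!
  simp [show 1 ≤ p by omega, show ¬ p ≤ 1 by omega]

lemma asl_natDegree (a₀ a₁ : F) : (X ^ p - C a₁ * X - C a₀).natDegree = p := by
  have hp2 : 2 ≤ p := (Fact.out : p.Prime).two_le
  compute_degree!
  all_goals first
    | omega
    | simp [show p ≠ 1 by omega, show p ≠ 0 by omega]
    | simp [show 1 ≤ p by omega, show ¬ p ≤ 1 by omega]

lemma asl_noroot_irred [CharP F p] {a₀ a₁ b : F} (hb0 : b ≠ 0) (hb : a₁ = b ^ (p - 1))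
    (hnr : ¬ ∃ r : F, r ^ p = a₁ * r + a₀) :
    Irreducible (X ^ p - C a₁ * X - C a₀ : F[X]) := by
  classical
  have hp : p.Prime := Fact.out
  have hp2 : 2 ≤ p := hp.two_le
  set f : F[X] := X ^ p - C a₁ * X - C a₀ with hf
  have hmonic : f.Monic := asl_monic p a₀ a₁
  have hdeg : f.natDegree = p := asl_natDegree p a₀ a₁
  have hf0 : f ≠ 0 := hmonic.ne_zero
  have hdeg' : f.degree = (p : WithBot ℕ) := by
    rw [degree_eq_natDegree hf0, hdeg]
  set K := f.SplittingField with hK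
  haveI : CharP K p := charP_of_injective_algebraMap (algebraMap F K).injective p
  have hsplit : Splits (f.map (algebraMap F K)) := SplittingField.splits f
  have heval : ∀ (r : K), eval₂ (algebraMap F K) r f
      = r ^ p - algebraMap F K a₁ * r - algebraMap F K a₀ := by
    intro r
    simp [hf]
  obtain ⟨α, hα0⟩ : ∃ α, eval₂ (algebraMap F K) α f = 0 := by
    obtain ⟨α, h⟩ := hsplit.exists_eval_eq_zero
      (by rw [degree_map, hdeg']; exact_mod_cast hp.ne_zero)
    exact ⟨α, by rwa [eval_map] at h⟩
  have hα : α ^ p = algebraMap F K a₁ * α + algebraMap F K a₀ := by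
    have h := hα0
    rw [heval α] at h
    linear_combination h
  -- classification of roots of `f` in `K`
  have hclass : ∀ r : K, r ^ p = algebraMap F K a₁ * r + algebraMap F K a₀ →
      ∃ e : F, r = α + algebraMap F K e := by
    intro r hr
    by_cases hδ : r - α = 0
    · exact ⟨0, by rw [map_zero, add_zero]; exact sub_eq_zero.mp hδ⟩
    · set δ := r - α with hδdef
      have hδp : δ ^ p = algebraMap F K a₁ * δ := by
        rw [hδdef, sub_pow_char r α, hr, hα]; ring
      set b' := algebraMap F K b with hb'
      have hb'0 : b' ≠ 0 := by
        rw [hb']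
        exact (map_ne_zero_iff _ (algebraMap F K).injective).mpr hb0
      set t := δ / b' with ht
      have htp : t ^ p = t := by
        rw [ht, div_pow, hδp, hb, map_pow, ← hb',
          div_eq_div_iff (pow_ne_zero _ hb'0) hb'0]
        have hbb : b' ^ (p - 1) * b' = b' ^ p := pow_sub_one_mul hp.ne_zero b'
        linear_combination δ * hbb
      obtain ⟨j, hj⟩ := asl_mem_range_of_pow_eq
        ((algebraMap F K).comp (algebraMap (ZMod p) F))
        (((algebraMap F K).comp (algebraMap (ZMod p) F)).injective)
        (by rw [ZMod.card]; exact hp2)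
        (fun a => by
          rw [show Fintype.card (ZMod p) = p from ZMod.card p]
          simp only [RingHom.coe_comp, Function.comp_apply, ← map_pow, ZMod.pow_card])
        (x := t) (by rw [show Fintype.card (ZMod p) = p from ZMod.card p]; exact htp)
      refine ⟨algebraMap (ZMod p) F j * b, ?_⟩
      have h1 : algebraMap F K (algebraMap (ZMod p) F j * b) = t * b' := by
        rw [map_mul, ← hb', ← hj]; rfl
      have h2 : t * b' = δ := div_mul_cancel₀ δ hb'0
      rw [h1, h2, hδdef]; ring
  -- all normalized factors have degree D
  haveI : FiniteDimensional F K := inferInstance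
  set D := (minpoly F α).natDegree with hD
  have hDfac : ∀ g ∈ UniqueFactorizationMonoid.normalizedFactors f, g.natDegree = D := by
    intro g hg
    have hgirr : Irreducible g :=
      UniqueFactorizationMonoid.irreducible_of_normalized_factor g hg
    have hgdvd : g ∣ f := UniqueFactorizationMonoid.dvd_of_mem_normalizedFactors hg
    have hgmonic : g.Monic := by
      have hnorm := UniqueFactorizationMonoid.normalize_normalized_factor g hg
      rw [← hnorm]
      exact monic_normalize hgirr.ne_zero
    have hgsplits := Splits.of_dvd hsplit (Polynomial.map_ne_zero hf0)
      (Polynomial.map_dvd (algebraMap F K) hgdvd)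
    obtain ⟨r, hrr⟩ : ∃ r, eval₂ (algebraMap F K) r g = 0 := by
      obtain ⟨r, h⟩ := hgsplits.exists_eval_eq_zero
        (by rw [degree_map, degree_eq_natDegree hgirr.ne_zero]
            exact_mod_cast hgirr.natDegree_pos.ne')
      exact ⟨r, by rwa [eval_map] at h⟩
    have hrf : r ^ p = algebraMap F K a₁ * r + algebraMap F K a₀ := by
      obtain ⟨u, hu⟩ := hgdvd
      have h0 := congrArg (eval₂ (algebraMap F K) r) hu
      rw [eval₂_mul, hrr, zero_mul] at h0
      rw [heval r] at h0
      linear_combination h0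
    obtain ⟨e, rfl⟩ := hclass r hrf
    have hgmin : g = minpoly F (α + algebraMap F K e) := by
      refine minpoly.eq_of_irreducible_of_monic hgirr ?_ hgmonic
      rw [aeval_def]; exact hrr
    rw [hgmin, minpoly.add_algebraMap α e, natDegree_comp, natDegree_X_sub_C, mul_one]
  -- degree counting
  have hsum : p = D * Multiset.card (UniqueFactorizationMonoid.normalizedFactors f) := by
    have hassoc := UniqueFactorizationMonoid.prod_normalizedFactors hf0
    obtain ⟨u, hu⟩ := hassoc
    have hu0 : (u : F[X]) ≠ 0 := u.ne_zero
    have hprod0 : (UniqueFactorizationMonoid.normalizedFactors f).prod ≠ 0 := by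
      intro h0
      rw [h0, zero_mul] at hu
      exact hf0 hu.symm
    have h1 : f.natDegree
        = ((UniqueFactorizationMonoid.normalizedFactors f).prod).natDegree := by
      conv_lhs => rw [← hu]
      rw [natDegree_mul hprod0 hu0, natDegree_eq_zero_of_isUnit u.isUnit, add_zero]
    have h2 : ((UniqueFactorizationMonoid.normalizedFactors f).prod).natDegree
        = ((UniqueFactorizationMonoid.normalizedFactors f).map natDegree).sum :=
      natDegree_multiset_prod_of_monic _ (fun g hg => by
        have hnorm := UniqueFactorizationMonoid.normalize_normalized_factor g hg
        rw [← hnorm]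
        exact monic_normalize
          (UniqueFactorizationMonoid.irreducible_of_normalized_factor g hg).ne_zero)
    have h3 : ((UniqueFactorizationMonoid.normalizedFactors f).map natDegree)
        = Multiset.replicate
            (Multiset.card (UniqueFactorizationMonoid.normalizedFactors f)) D :=
      Multiset.eq_replicate.2 ⟨by simp, fun x hx => by
        obtain ⟨g, hg, rfl⟩ := Multiset.mem_map.1 hx
        exact hDfac g hg⟩
    rw [← hdeg, h1, h2, h3, Multiset.sum_replicate, smul_eq_mul, mul_comm]
  -- D divides p
  have hDdvd : D ∣ p := Dvd.intro _ hsum.symm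
  rcases hp.eq_one_or_self_of_dvd D hDdvd with hD1 | hDp
  · -- degree-one factor gives a root in F, contradiction
    exfalso
    rw [hD1, one_mul] at hsum
    have hne : UniqueFactorizationMonoid.normalizedFactors f ≠ 0 := by
      intro h0
      rw [h0] at hsum
      simp at hsum
      omega
    obtain ⟨g, hg⟩ := Multiset.exists_mem_of_ne_zero hne
    have hgmonic : g.Monic := by
      have hnorm := UniqueFactorizationMonoid.normalize_normalized_factor g hg
      rw [← hnorm]
      exact monic_normalize
        (UniqueFactorizationMonoid.irreducible_of_normalized_factor g hg).ne_zero
    have hg1 : g.natDegree = 1 := by rw [hDfac g hg, hD1]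
    have hgX : g = X + C (g.coeff 0) := hgmonic.eq_X_add_C hg1
    have hroot : f.IsRoot (-(g.coeff 0)) := by
      refine IsRoot.dvd ?_ (UniqueFactorizationMonoid.dvd_of_mem_normalizedFactors hg)
      rw [hgX]
      simp [IsRoot.def]
    apply hnr
    refine ⟨-(g.coeff 0), ?_⟩
    have : eval (-(g.coeff 0)) f = 0 := hroot
    rw [hf] at this
    simp only [eval_sub, eval_pow, eval_X, eval_mul, eval_C] at this
    linear_combination this
  · -- single factor: f is irreducible
    have hcard1 : Multiset.card (UniqueFactorizationMonoid.normalizedFactors f) = 1 := by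
      rw [hDp] at hsum
      exact (Nat.eq_of_mul_eq_mul_left hp.pos (by rw [mul_one]; exact hsum)).symm
    obtain ⟨g, hg⟩ := Multiset.card_eq_one.1 hcard1
    have hassoc := UniqueFactorizationMonoid.prod_normalizedFactors hf0
    rw [hg, Multiset.prod_singleton] at hassoc
    exact hassoc.irreducible
      (UniqueFactorizationMonoid.irreducible_of_normalized_factor g
        (by rw [hg]; exact Multiset.mem_singleton_self g))

lemma asl_irred_exists_b (s : ℕ) (hcard : Fintype.card F = p ^ s)
    {a₀ a₁ : F} (ha1 : a₁ ≠ 0)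
    (hirr : Irreducible (X ^ p - C a₁ * X - C a₀ : F[X])) :
    ∃ b : F, b ≠ 0 ∧ a₁ = b ^ (p - 1) := by
  classical
  have hp : p.Prime := Fact.out
  have hp2 : 2 ≤ p := hp.two_le
  haveI : CharP F p := charP_of_injective_algebraMap (algebraMap (ZMod p) F).injective p
  set q := Fintype.card F with hqdef
  have hq2 : 2 ≤ q := Fintype.one_lt_card
  have hq0 : q ≠ 0 := by omega
  set f : F[X] := X ^ p - C a₁ * X - C a₀ with hf
  have hmonic : f.Monic := asl_monic p a₀ a₁
  have hdeg : f.natDegree = p := asl_natDegree p a₀ a₁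
  have hf0 : f ≠ 0 := hmonic.ne_zero
  haveI : Fact (Irreducible f) := ⟨hirr⟩
  set K := AdjoinRoot f with hK
  haveI : Module.Finite F K := Module.Finite.of_basis (AdjoinRoot.powerBasis hf0).basis
  haveI : Finite K := Module.finite_of_finite F
  letI : Fintype K := Fintype.ofFinite K
  haveI : CharP K p := charP_of_injective_algebraMap (algebraMap F K).injective p
  have hfinrank : Module.finrank F K = p := by
    rw [(AdjoinRoot.powerBasis hf0).finrank]
    simpa using hdeg
  have hcardK : Fintype.card K = q ^ p := by
    rw [Module.card_eq_pow_finrank (K := F) (V := K), hfinrank]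
  -- elements fixed by x ↦ x ^ q are in the image of F
  have hrange : ∀ x : K, x ^ q = x → ∃ a : F, algebraMap F K a = x := by
    intro x hx
    exact asl_mem_range_of_pow_eq (algebraMap F K) (algebraMap F K).injective hq2
      (fun a => by rw [← map_pow, FiniteField.pow_card]) hx
  set α := AdjoinRoot.root f with hα
  have hαf : α ^ p = algebraMap F K a₁ * α + algebraMap F K a₀ := by
    have h := AdjoinRoot.eval₂_root f
    rw [hf] at h
    simp only [eval₂_sub, eval₂_pow, eval₂_X, eval₂_mul, eval₂_C] at h
    rw [AdjoinRoot.algebraMap_eq]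
    linear_combination h
  -- the Frobenius x ↦ x ^ q
  set φ : K →+* K := iterateFrobenius K p s with hφdef
  have hφ : ∀ x : K, φ x = x ^ q := fun x => by
    rw [hφdef, iterateFrobenius_def, ← hcard]
  have hfixed : ∀ a : F, φ (algebraMap F K a) = algebraMap F K a := fun a => by
    rw [hφ, ← map_pow, FiniteField.pow_card]
  have hφα : φ α ^ p = algebraMap F K a₁ * φ α + algebraMap F K a₀ := by
    have h := congrArg φ hαf
    rw [map_pow, map_add, map_mul, hfixed, hfixed] at h
    exact h
  set β : K := φ α - α with hβ
  have hβp : β ^ p = algebraMap F K a₁ * β := by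
    rw [hβ, sub_pow_char (φ α) α, hφα, hαf]
    ring
  have ha1' : algebraMap F K a₁ ≠ 0 :=
    (map_ne_zero_iff _ (algebraMap F K).injective).mpr ha1
  -- β ≠ 0 because f has no root in F
  have hβ0 : β ≠ 0 := by
    intro h0
    have hαq : α ^ q = α := by
      have := sub_eq_zero.mp (hβ ▸ h0)
      rw [hφ] at this
      exact this
    obtain ⟨r, hr⟩ := hrange α hαq
    have hrF : r ^ p = a₁ * r + a₀ := by
      apply (algebraMap F K).injective
      rw [map_pow, map_add, map_mul, hr, hαf]
    have hroot : f.IsRoot r := by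
      rw [hf]
      simp only [IsRoot.def, eval_sub, eval_pow, eval_X, eval_mul, eval_C]
      linear_combination hrF
    obtain ⟨t, ht⟩ := (dvd_iff_isRoot.2 hroot : X - C r ∣ f)
    rcases hirr.isUnit_or_isUnit ht with hu | hu
    · exact not_isUnit_X_sub_C r hu
    · have ht0 : t ≠ 0 := hu.ne_zero
      have : f.natDegree = 1 := by
        rw [ht, natDegree_mul (X_sub_C_ne_zero r) ht0, natDegree_X_sub_C,
          natDegree_eq_zero_of_isUnit hu]
      omega
  -- the multiplier c
  set c : K := β ^ (q - 1) with hc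
  have hcβ : c * β = β ^ q := pow_sub_one_mul hq0 β
  have hβp1 : β ^ (p - 1) = algebraMap F K a₁ := by
    have h1 : β ^ (p - 1) * β = algebraMap F K a₁ * β := by
      rw [pow_sub_one_mul hp.ne_zero, hβp]
    exact mul_right_cancel₀ hβ0 h1
  have ha1q : (algebraMap F K a₁) ^ (q - 1) = 1 := by
    rw [← map_pow, FiniteField.pow_card_sub_one_eq_one a₁ ha1, map_one]
  have hcp : c ^ p = c := by
    calc c ^ p = (β ^ p) ^ (q - 1) := by
          rw [hc, ← pow_mul, ← pow_mul, mul_comm]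
      _ = (algebraMap F K a₁) ^ (q - 1) * β ^ (q - 1) := by rw [hβp, mul_pow]
      _ = c := by rw [ha1q, one_mul, hc]
  have hcpn : ∀ n : ℕ, c ^ p ^ n = c := by
    intro n
    induction n with
    | zero => simp
    | succ n ih => rw [pow_succ, pow_mul, ih, hcp]
  have hφc : φ c = c := by rw [hφ, hcard]; exact hcpn s
  have hφβ : φ β = c * β := by rw [hφ, ← hcβ]
  -- iterating Frobenius on α
  have hφα' : φ α = α + β := by rw [hβ]; ring
  have hiter : ∀ k : ℕ, α ^ q ^ k = α + (∑ i ∈ Finset.range k, c ^ i) * β := by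
    intro k
    induction k with
    | zero => simp
    | succ k ih =>
      have h1 : α ^ q ^ (k + 1) = φ (α ^ q ^ k) := by
        rw [hφ, ← pow_mul, ← pow_succ]
      rw [h1, ih, map_add, map_mul, hφα', hφβ, map_sum]
      have h2 : ∀ i ∈ Finset.range k, φ (c ^ i) = c ^ i := fun i _ => by
        rw [map_pow, hφc]
      rw [Finset.sum_congr rfl h2, geom_sum_succ]
      ring
  -- α ^ (q ^ p) = α
  have hαqp : α ^ q ^ p = α := by
    rw [← hcardK]
    exact FiniteField.pow_card α
  have hS0 : (∑ i ∈ Finset.range p, c ^ i) = 0 := by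
    have h := hiter p
    rw [hαqp] at h
    have h2 : (∑ i ∈ Finset.range p, c ^ i) * β = 0 := by linear_combination -h
    rcases mul_eq_zero.1 h2 with h3 | h3
    · exact h3
    · exact absurd h3 hβ0
  have hc1 : c = 1 := by
    have h := geom_sum_mul c p
    rw [hS0, zero_mul, hcp] at h
    have : c - 1 = 0 := by linear_combination -h
    linear_combination this
  -- β is fixed by Frobenius, hence comes from F
  have hβq : β ^ q = β := by rw [← hcβ, hc1, one_mul]
  obtain ⟨b, hb⟩ := hrange β hβq
  have hb0 : b ≠ 0 := by
    intro h0
    rw [h0, map_zero] at hb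
    exact hβ0 hb.symm
  refine ⟨b, hb0, ?_⟩
  apply (algebraMap F K).injective
  rw [map_pow, hb, hβp1]

end AuxiliaryLemmas

/-- For f(X) = X^p − a₁X − a₀ over F_q, q = p^s, with a₁a₀ ≠ 0: f is irreducible over
F_q iff a₁ = b^{p−1} for some b with Tr_{F_q/F_p}(a₀/b^p) ≠ 0. -/
theorem artin_schreier_like_irreducible (p : ℕ) [Fact p.Prime] (s : ℕ) (hs : 1 ≤ s)
    {F : Type*} [Field F] [Fintype F] [Algebra (ZMod p) F]
    (hcard : Fintype.card F = p ^ s)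
    (a₀ a₁ : F) (ha : a₁ * a₀ ≠ 0) :
    Irreducible (X ^ p - C a₁ * X - C a₀) ↔
      ∃ b : F, a₁ = b ^ (p - 1) ∧ Algebra.trace (ZMod p) F (a₀ / b ^ p) ≠ 0 := by
  have hp : p.Prime := Fact.out
  have hp2 : 2 ≤ p := hp.two_le
  haveI : CharP F p := asl_charP p
  have ha1 : a₁ ≠ 0 := left_ne_zero_of_mul ha
  constructor
  · intro hirr
    obtain ⟨b, hb0, hb⟩ := asl_irred_exists_b p s hcard ha1 hirr
    refine ⟨b, hb, ?_⟩
    intro hTr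
    obtain ⟨r, hr⟩ := (asl_root_iff p hb0 hb).mpr hTr
    have hroot : (X ^ p - C a₁ * X - C a₀ : F[X]).IsRoot r := by
      simp only [IsRoot.def, eval_sub, eval_pow, eval_X, eval_mul, eval_C]
      linear_combination hr
    obtain ⟨t, ht⟩ := (dvd_iff_isRoot.2 hroot : X - C r ∣ _)
    rcases hirr.isUnit_or_isUnit ht with hu | hu
    · exact not_isUnit_X_sub_C r hu
    · have ht0 : t ≠ 0 := hu.ne_zero
      have hd : (X ^ p - C a₁ * X - C a₀ : F[X]).natDegree = 1 := by
        rw [ht, natDegree_mul (X_sub_C_ne_zero r) ht0, natDegree_X_sub_C,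
          natDegree_eq_zero_of_isUnit hu]
      rw [asl_natDegree p a₀ a₁] at hd
      omega
  · rintro ⟨b, hb, hTr⟩
    have hb0 : b ≠ 0 := by
      intro h0
      apply ha1
      rw [hb, h0, zero_pow (by omega : p - 1 ≠ 0)]
    have hnr : ¬ ∃ r : F, r ^ p = a₁ * r + a₀ :=
      fun hr => hTr ((asl_root_iff p hb0 hb).mp hr)
    exact asl_noroot_irred p hb0 hb hnr
end

section
/- Let q = 3^s and f(X) = X³ − a₁X − a₀ ∈ F_q[X] with a₁·a₀ ≠ 0. Then f is irreducible over F_q if and only if there exists b ∈ F_q with a₁ = b² and Tr_{F_q/F_3}(a₀/b³) ≠ 0. -/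
open Polynomial

section Aux

variable {F : Type*} [Field F] [Fintype F] [Algebra (ZMod 3) F]

omit [Fintype F] in
lemma aux_charF : CharP F 3 := charP_of_injective_algebraMap (algebraMap (ZMod 3) F).injective 3

/-- Frobenius as a `ZMod 3`-algebra automorphism of `F`. -/
noncomputable def auxFrobAlg : F ≃ₐ[ZMod 3] F :=
  haveI : CharP F 3 := aux_charF
  AlgEquiv.ofBijective
    { toFun := fun x => x ^ 3
      map_one' := one_pow 3
      map_mul' := fun x y => mul_pow x y 3
      map_zero' := zero_pow (by norm_num)
      map_add' := fun x y => add_pow_char x y 3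
      commutes' := fun r => by
        show (algebraMap (ZMod 3) F r) ^ 3 = algebraMap (ZMod 3) F r
        rw [← map_pow, ZMod.pow_card] }
    ⟨fun x y h => frobenius_inj F 3 h,
     Finite.surjective_of_injective fun x y h => frobenius_inj F 3 h⟩

lemma aux_trace_cube (y : F) : Algebra.trace (ZMod 3) F (y ^ 3) = Algebra.trace (ZMod 3) F y :=
  Algebra.trace_eq_of_algEquiv (auxFrobAlg (F := F)) y

/-- The Artin–Schreier additive map `y ↦ y ^ 3 - y`. -/
noncomputable def auxAsHom : F →+ F :=
  haveI : CharP F 3 := aux_charF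
  { toFun := fun y => y ^ 3 - y
    map_zero' := by simp
    map_add' := fun x y => by
      show (x + y) ^ 3 - (x + y) = x ^ 3 - x + (y ^ 3 - y)
      rw [add_pow_char x y 3]; ring }

omit [Fintype F] in
lemma aux_asHom_ker_card : Nat.card (AddMonoidHom.ker (auxAsHom (F := F))) = 3 := by
  have : Nat.card (ZMod 3) = 3 := by simp [Nat.card_eq_fintype_card]
  rw [← this]
  refine (Nat.card_eq_of_bijective
    (fun r : ZMod 3 => (⟨algebraMap (ZMod 3) F r, ?_⟩ : AddMonoidHom.ker (auxAsHom (F := F))))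
    ⟨?_, ?_⟩).symm
  · show (algebraMap (ZMod 3) F r) ^ 3 - algebraMap (ZMod 3) F r = 0
    rw [← map_pow, ZMod.pow_card, sub_self]
  · intro a b hab
    exact (algebraMap (ZMod 3) F).injective (congrArg Subtype.val hab)
  · rintro ⟨y, hy⟩
    have h : y ^ 3 - y = 0 := hy
    have h' : y * (y - 1) * (y + 1) = 0 := by linear_combination h
    rcases mul_eq_zero.1 h' with h'' | h''
    · rcases mul_eq_zero.1 h'' with h3 | h3
      · exact ⟨0, by ext; simpa using h3.symm⟩
      · exact ⟨1, by ext; simp [sub_eq_zero.1 h3]⟩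
    · refine ⟨-1, ?_⟩
      ext
      simp only [map_neg, map_one]
      exact (eq_neg_of_add_eq_zero_left h'').symm

lemma aux_as_range_eq_trace_ker :
    AddMonoidHom.range (auxAsHom (F := F)) =
      AddMonoidHom.ker (Algebra.trace (ZMod 3) F).toAddMonoidHom := by
  set ψ := auxAsHom (F := F)
  set T := (Algebra.trace (ZMod 3) F).toAddMonoidHom with hT
  have hsub : ψ.range ≤ T.ker := by
    rintro _ ⟨y, rfl⟩
    show Algebra.trace (ZMod 3) F (y ^ 3 - y) = 0
    rw [map_sub, aux_trace_cube, sub_self]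
  have hTsurj : Function.Surjective T := Algebra.trace_surjective (ZMod 3) F
  have h1 : Nat.card F = Nat.card (F ⧸ ψ.ker) * Nat.card ψ.ker :=
    AddSubgroup.card_eq_card_quotient_mul_card_addSubgroup _
  have h2 : Nat.card (F ⧸ ψ.ker) = Nat.card ψ.range :=
    Nat.card_congr (QuotientAddGroup.quotientKerEquivRange ψ).toEquiv
  have h3 : Nat.card F = Nat.card (F ⧸ T.ker) * Nat.card T.ker :=
    AddSubgroup.card_eq_card_quotient_mul_card_addSubgroup _
  have h4 : Nat.card (F ⧸ T.ker) = 3 := by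
    rw [Nat.card_congr (QuotientAddGroup.quotientKerEquivOfSurjective T hTsurj).toEquiv]
    simp [Nat.card_eq_fintype_card]
  have hcards : Nat.card T.ker = Nat.card ψ.range := by
    have := h1.symm.trans h3
    rw [h2, h4, aux_asHom_ker_card] at this
    omega
  refine SetLike.ext' (Set.eq_of_subset_of_ncard_le hsub ?_ (Set.toFinite _))
  rw [← Nat.card_coe_set_eq, ← Nat.card_coe_set_eq]
  exact le_of_eq hcards

lemma aux_artin_schreier (c : F) :
    (∃ y : F, y ^ 3 - y = c) ↔ Algebra.trace (ZMod 3) F c = 0 := by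
  have := SetLike.ext_iff.1 (aux_as_range_eq_trace_ker (F := F)) c
  simpa [AddMonoidHom.mem_ker, AddMonoidHom.mem_range, auxAsHom] using this

omit [Fintype F] in
lemma aux_nonsquare_root [Finite F] (a₁ : F) (hns : ¬∃ b : F, a₁ = b ^ 2) (a₀ : F) :
    ∃ x : F, x ^ 3 - a₁ * x = a₀ := by
  haveI : CharP F 3 := aux_charF
  have hinj : Function.Injective (fun x : F => x ^ 3 - a₁ * x) := by
    intro x y h
    simp only at h
    have h2 : (x - y) * ((x - y) ^ 2 - a₁) = 0 := by
      have h3 : (x - y) ^ 3 = x ^ 3 - y ^ 3 := sub_pow_char (p := 3) x y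
      linear_combination h + h3
    rcases mul_eq_zero.1 h2 with h'' | h''
    · exact sub_eq_zero.1 h''
    · exact absurd ⟨x - y, (sub_eq_zero.1 h'').symm⟩ hns
  exact Finite.surjective_of_injective hinj a₀

end Aux

/-- For f(X) = X³ − a₁X − a₀ over F_q, q = 3^s, with a₁a₀ ≠ 0: f is irreducible over
F_q iff a₁ = b² for some b with Tr_{F_q/F_3}(a₀/b³) ≠ 0. -/
theorem cubic_irreducible_no_quadratic_term (s : ℕ) (hs : 1 ≤ s)
    {F : Type*} [Field F] [Fintype F] [Algebra (ZMod 3) F]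
    (hcard : Fintype.card F = 3 ^ s)
    (a₀ a₁ : F) (ha : a₁ * a₀ ≠ 0) :
    Irreducible (X ^ 3 - C a₁ * X - C a₀) ↔
      ∃ b : F, a₁ = b ^ 2 ∧ Algebra.trace (ZMod 3) F (a₀ / b ^ 3) ≠ 0 := by
  have ha₁ : a₁ ≠ 0 := left_ne_zero_of_mul ha
  set f : F[X] := X ^ 3 - C a₁ * X - C a₀ with hf
  have hmonic : f.Monic := by
    have he : f = X ^ 3 - (C a₁ * X + C a₀) := by ring
    rw [he]
    apply monic_X_pow_sub
    refine lt_of_le_of_lt (degree_add_le _ _) ?_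
    simp only [max_lt_iff]
    refine ⟨lt_of_le_of_lt (degree_mul_le _ _) ?_, lt_of_le_of_lt degree_C_le (by norm_num)⟩
    calc (C a₁).degree + X.degree ≤ 0 + 1 := add_le_add degree_C_le degree_X_le
      _ < 3 := by norm_num
  have hdeg : f.natDegree = 3 := by
    have : f = X ^ 3 - C a₁ * X - C a₀ := rfl
    rw [this]
    compute_degree!
  have hroots : Irreducible f ↔ ¬∃ x : F, x ^ 3 - a₁ * x - a₀ = 0 := by
    rw [hmonic.irreducible_iff_roots_eq_zero_of_degree_le_three (by omega) (by omega)]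
    rw [Multiset.eq_zero_iff_forall_notMem]
    constructor
    · rintro h ⟨x, hx⟩
      exact h x (by
        rw [mem_roots hmonic.ne_zero]
        show f.IsRoot x
        simp [hf, IsRoot, hx])
    · intro h x hx
      rw [mem_roots hmonic.ne_zero] at hx
      exact h ⟨x, by simpa [hf, IsRoot] using hx⟩
  rw [hroots]
  constructor
  · intro hnr
    by_contra hno
    push_neg at hno
    by_cases hsq : ∃ b : F, a₁ = b ^ 2
    · obtain ⟨b, rfl⟩ := hsq
      have hb : b ≠ 0 := fun h => ha₁ (by simp [h])
      have htr : Algebra.trace (ZMod 3) F (a₀ / b ^ 3) = 0 := hno b rfl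
      obtain ⟨y, hy⟩ := (aux_artin_schreier (a₀ / b ^ 3)).2 htr
      refine hnr ⟨b * y, ?_⟩
      have hb3 : b ^ 3 ≠ 0 := pow_ne_zero _ hb
      have hy' : (y ^ 3 - y) * b ^ 3 = a₀ := by rw [hy]; field_simp
      linear_combination hy'
    · obtain ⟨x, hx⟩ := aux_nonsquare_root a₁ hsq a₀
      exact hnr ⟨x, by rw [hx]; ring⟩
  · rintro ⟨b, rfl, htr⟩ ⟨x, hx⟩
    have hb : b ≠ 0 := fun h => ha₁ (by simp [h])
    have hb3 : b ^ 3 ≠ 0 := pow_ne_zero _ hb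
    refine htr ((aux_artin_schreier (a₀ / b ^ 3)).1 ⟨x / b, ?_⟩)
    rw [div_pow, show x / b = x * b ^ 2 / b ^ 3 by
      rw [div_eq_div_iff hb hb3]; ring, div_sub_div_same]
    exact congrArg (· / b ^ 3) (by linear_combination hx)
end

section
/- Let q = 3^s and f(X) = X³ − a₂X² − a₁X − a₀ ∈ F_q[X] with a₂ ≠ 0. Then f is irreducible over F_q if and only if there exists b ∈ F_q with a₂⁴/(a₂²a₁² + a₁³ − a₀a₂³) = b² and Tr_{F_q/F_3}(1/(a₂b)) ≠ 0. -/
open Polynomial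

section Aux

variable {F : Type*} [Field F] [Fintype F] [Algebra (ZMod 3) F]

lemma trace_frob_aux (x : F) :
    Algebra.trace (ZMod 3) F (x ^ 3) = Algebra.trace (ZMod 3) F x := by
  haveI : Fact (Nat.Prime 3) := ⟨by norm_num⟩
  haveI : CharP F 3 := charP_of_injective_ringHom (algebraMap (ZMod 3) F).injective 3
  let φ : F →+* F := frobenius F 3
  have hb : Function.Bijective φ := (Finite.injective_iff_bijective).1 φ.injective
  let e : F ≃ₐ[ZMod 3] F := AlgEquiv.ofBijective
    { toRingHom := φ,
      commutes' := fun c => by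
        show (algebraMap (ZMod 3) F c) ^ 3 = algebraMap (ZMod 3) F c
        rw [← map_pow, ZMod.pow_card] } hb
  have := Algebra.trace_eq_of_algEquiv e x
  exact this

lemma artin_schreier_aux (c : F) :
    (∃ u : F, u ^ 3 - u = c) ↔ Algebra.trace (ZMod 3) F c = 0 := by
  haveI : Fact (Nat.Prime 3) := ⟨by norm_num⟩
  haveI : CharP F 3 := charP_of_injective_ringHom (algebraMap (ZMod 3) F).injective 3
  haveI : Module.Finite (ZMod 3) F := Module.Finite.of_finite
  let φ : F →ₗ[ZMod 3] F :=
    { toFun := fun u => u ^ 3 - u,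
      map_add' := fun u v => by
        show (u + v) ^ 3 - (u + v) = (u ^ 3 - u) + (v ^ 3 - v)
        rw [add_pow_char u v]; ring,
      map_smul' := fun m u => by
        simp only [RingHom.id_apply, Algebra.smul_def, mul_pow, smul_sub]
        rw [← map_pow, ZMod.pow_card]
        ring }
  let T : F →ₗ[ZMod 3] ZMod 3 := Algebra.trace (ZMod 3) F
  have hle : LinearMap.range φ ≤ LinearMap.ker T := by
    rintro _ ⟨u, rfl⟩
    simp only [LinearMap.mem_ker, T]
    show Algebra.trace (ZMod 3) F (u ^ 3 - u) = 0
    rw [map_sub, trace_frob_aux, sub_self]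
  have hker : LinearMap.ker φ = LinearMap.range (Algebra.linearMap (ZMod 3) F) := by
    ext u
    simp only [LinearMap.mem_ker, LinearMap.mem_range, Algebra.linearMap_apply]
    constructor
    · intro hu
      have hu : u ^ 3 - u = 0 := hu
      have : u * (u - 1) * (u + 1) = 0 := by rw [← hu]; ring
      rcases mul_eq_zero.1 this with h | h
      · rcases mul_eq_zero.1 h with h | h
        · exact ⟨0, by simpa using h.symm⟩
        · exact ⟨1, by rw [map_one]; linear_combination -h⟩
      · exact ⟨-1, by rw [map_neg, map_one]; linear_combination -h⟩
    · rintro ⟨d, rfl⟩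
      show (algebraMap (ZMod 3) F d) ^ 3 - algebraMap (ZMod 3) F d = 0
      rw [← map_pow, ZMod.pow_card, sub_self]
  have hrange : LinearMap.range φ = LinearMap.ker T := by
    apply Submodule.eq_of_le_of_finrank_eq hle
    have h1 : Module.finrank (ZMod 3) (LinearMap.range φ)
        + Module.finrank (ZMod 3) (LinearMap.ker φ)
        = Module.finrank (ZMod 3) F := LinearMap.finrank_range_add_finrank_ker φ
    have h2 : Module.finrank (ZMod 3) (LinearMap.range T)
        + Module.finrank (ZMod 3) (LinearMap.ker T)
        = Module.finrank (ZMod 3) F := LinearMap.finrank_range_add_finrank_ker T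
    have hkf : Module.finrank (ZMod 3) (LinearMap.ker φ) = 1 := by
      rw [hker, LinearMap.finrank_range_of_inj (algebraMap (ZMod 3) F).injective]
      simp
    have hT : LinearMap.range T = ⊤ := LinearMap.range_eq_top.mpr (Algebra.trace_surjective _ _)
    rw [hT, finrank_top] at h2
    simp only [Module.finrank_self] at h2
    omega
  constructor
  · rintro ⟨u, rfl⟩
    exact hle ⟨u, rfl⟩
  · intro hc
    have : c ∈ LinearMap.range φ := by rw [hrange]; exact hc
    rcases this with ⟨u, hu⟩
    exact ⟨u, hu⟩

lemma cubic_irred_iff_no_root (a₀ a₁ a₂ : F) :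
    Irreducible (X ^ 3 - C a₂ * X ^ 2 - C a₁ * X - C a₀) ↔
      ∀ x : F, x ^ 3 - a₂ * x ^ 2 - a₁ * x - a₀ ≠ 0 := by
  have hdeg : (X ^ 3 - C a₂ * X ^ 2 - C a₁ * X - C a₀ : F[X]).natDegree = 3 := by
    compute_degree!
  have hne : (X ^ 3 - C a₂ * X ^ 2 - C a₁ * X - C a₀ : F[X]) ≠ 0 := by
    intro h; rw [h] at hdeg; simp at hdeg
  rw [irreducible_iff_roots_eq_zero_of_degree_le_three (by omega) (by omega),
    Multiset.eq_zero_iff_forall_notMem]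
  constructor
  · intro h x hx
    exact h x (by rw [mem_roots hne]; simp [IsRoot, hx])
  · intro h x hx
    rw [mem_roots hne] at hx
    apply h x
    simpa [IsRoot] using hx

end Aux

/-- For f(X) = X³ − a₂X² − a₁X − a₀ over F_q, q = 3^s, with a₂ ≠ 0 (and the implicit
nondegeneracy a₂²a₁² + a₁³ − a₀a₂³ ≠ 0): f is irreducible over F_q iff
a₂⁴/(a₂²a₁² + a₁³ − a₀a₂³) = b² for some b with Tr_{F_q/F_3}(1/(a₂b)) ≠ 0. -/
theorem cubic_irreducible_general (s : ℕ) (hs : 1 ≤ s)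
    {F : Type*} [Field F] [Fintype F] [Algebra (ZMod 3) F]
    (hcard : Fintype.card F = 3 ^ s)
    (a₀ a₁ a₂ : F) (ha₂ : a₂ ≠ 0)
    (hden : a₂ ^ 2 * a₁ ^ 2 + a₁ ^ 3 - a₀ * a₂ ^ 3 ≠ 0) :
    Irreducible (X ^ 3 - C a₂ * X ^ 2 - C a₁ * X - C a₀) ↔
      ∃ b : F, a₂ ^ 4 / (a₂ ^ 2 * a₁ ^ 2 + a₁ ^ 3 - a₀ * a₂ ^ 3) = b ^ 2 ∧
        Algebra.trace (ZMod 3) F (1 / (a₂ * b)) ≠ 0 := by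
  haveI : Fact (Nat.Prime 3) := ⟨by norm_num⟩
  haveI : CharP F 3 := charP_of_injective_ringHom (algebraMap (ZMod 3) F).injective 3
  have h3 : (3 : F) = 0 := by exact_mod_cast CharP.cast_eq_zero F 3
  set D : F := a₂ ^ 2 * a₁ ^ 2 + a₁ ^ 3 - a₀ * a₂ ^ 3 with hD
  -- Möbius identity relating f and E(w) = D w³ − a₂⁴ w + a₂³
  have moeb : ∀ w : F, w ≠ 0 →
      D * w ^ 3 - a₂ ^ 4 * w + a₂ ^ 3 =
        a₂ ^ 3 * w ^ 3 * ((1/w + a₁/a₂) ^ 3 - a₂ * (1/w + a₁/a₂) ^ 2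
          - a₁ * (1/w + a₁/a₂) - a₀) := by
    intro w h0
    field_simp
    linear_combination (a₂^6*w^9) * hD
      + (-w*a₂^2*a₁ - w^2*a₂*a₁^2 + w^2*a₂^3*a₁ + w^3*a₂^2*a₁^2) * h3
  -- Step 1: roots of f correspond to roots of E
  have key1 : (∃ x : F, x ^ 3 - a₂ * x ^ 2 - a₁ * x - a₀ = 0) ↔
      (∃ w : F, D * w ^ 3 - a₂ ^ 4 * w + a₂ ^ 3 = 0) := by
    constructor
    · rintro ⟨x, hx⟩
      have h0 : a₂ * x - a₁ ≠ 0 := by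
        intro h
        apply hden
        have hcube : a₂ ^ 3 * (a₂ ^ 2 * a₁ ^ 2 + a₁ ^ 3 - a₀ * a₂ ^ 3) = 0 := by
          linear_combination a₂^6 * hx
            + (-a₂^5*x^2 + a₂^6*x - a₁*a₂^4*x + 2*a₁*a₂^5 - a₁^2*a₂^3) * h
            + (a₁^2*a₂^5) * h3
        rcases mul_eq_zero.1 hcube with h' | h'
        · exact absurd h' (pow_ne_zero _ ha₂)
        · exact h'
      refine ⟨a₂ / (a₂ * x - a₁), ?_⟩
      have hw0 : a₂ / (a₂ * x - a₁) ≠ 0 := div_ne_zero ha₂ h0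
      have hxw : 1 / (a₂ / (a₂ * x - a₁)) + a₁ / a₂ = x := by
        field_simp
        ring
      rw [moeb _ hw0, hxw, hx, mul_zero]
    · rintro ⟨w, hw⟩
      have hw0 : w ≠ 0 := by
        intro h
        rw [h] at hw
        have h3' : a₂ ^ 3 = 0 := by linear_combination hw
        exact ha₂ (by simpa using h3')
      refine ⟨1/w + a₁/a₂, ?_⟩
      have h := moeb w hw0
      rw [hw] at h
      have hne : a₂ ^ 3 * w ^ 3 ≠ 0 := mul_ne_zero (pow_ne_zero _ ha₂) (pow_ne_zero _ hw0)
      rcases mul_eq_zero.1 h.symm with h' | h'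
      · exact absurd h' hne
      · exact h'
  rw [cubic_irred_iff_no_root]
  have hnr : (∀ x : F, x ^ 3 - a₂ * x ^ 2 - a₁ * x - a₀ ≠ 0) ↔
      ¬ (∃ x : F, x ^ 3 - a₂ * x ^ 2 - a₁ * x - a₀ = 0) := by push_neg; rfl
  rw [hnr, key1]
  by_cases hsq : ∃ b : F, a₂ ^ 4 / D = b ^ 2
  · obtain ⟨b₀, hb₀⟩ := hsq
    have hb₀0 : b₀ ≠ 0 := by
      intro h
      rw [h] at hb₀
      simp only [ne_eq, zero_pow, OfNat.ofNat_ne_zero, not_false_eq_true] at hb₀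
      rw [_root_.div_eq_zero_iff] at hb₀
      rcases hb₀ with h' | h'
      · exact ha₂ (by simpa using h')
      · exact hden h'
    have hb₀' : a₂ ^ 4 = b₀ ^ 2 * D := by
      rw [div_eq_iff hden] at hb₀; linear_combination hb₀
    -- scaling identity
    have scale : ∀ u : F, D * (b₀*u) ^ 3 - a₂ ^ 4 * (b₀*u) + a₂ ^ 3
        = D * b₀ ^ 3 * (u ^ 3 - u + 1/(a₂*b₀)) := by
      intro u
      field_simp
      linear_combination (1 - a₂*b₀*u) * hb₀'
    have key2 : (∃ w : F, D * w ^ 3 - a₂ ^ 4 * w + a₂ ^ 3 = 0) ↔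
        (∃ u : F, u ^ 3 - u = -(1/(a₂*b₀))) := by
      constructor
      · rintro ⟨w, hw⟩
        refine ⟨w / b₀, ?_⟩
        have hbw : b₀ * (w / b₀) = w := by field_simp
        have h := scale (w / b₀)
        rw [hbw, hw] at h
        have hne : D * b₀ ^ 3 ≠ 0 := mul_ne_zero hden (pow_ne_zero _ hb₀0)
        rcases mul_eq_zero.1 h.symm with h' | h'
        · exact absurd h' hne
        · linear_combination h'
      · rintro ⟨u, hu⟩
        refine ⟨b₀ * u, ?_⟩
        rw [scale u, hu]
        ring
    rw [key2, artin_schreier_aux, map_neg, neg_eq_zero]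
    constructor
    · intro h
      exact ⟨b₀, hb₀, h⟩
    · rintro ⟨b, hb, htr⟩
      have hbb : (b - b₀) * (b + b₀) = 0 := by
        have : b ^ 2 = b₀ ^ 2 := by rw [← hb, ← hb₀]
        linear_combination this
      rcases mul_eq_zero.1 hbb with h' | h'
      · have hbe : b = b₀ := by linear_combination h'
        rwa [hbe] at htr
      · have hbe : b = -b₀ := by linear_combination h'
        rw [hbe] at htr
        intro h0
        apply htr
        have : 1 / (a₂ * -b₀) = -(1 / (a₂ * b₀)) := by
          field_simp
        rw [this, map_neg, neg_eq_zero]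
        exact h0
  · -- no square root: E always has a root, f is reducible, and RHS is false
    have inj : Function.Injective (fun w : F => D * w ^ 3 - a₂ ^ 4 * w) := by
      intro w1 w2 h
      simp only at h
      by_contra hne
      have hne' : w1 - w2 ≠ 0 := sub_ne_zero.2 hne
      have h1 : (w1 - w2) * (D * (w1 - w2) ^ 2 - a₂ ^ 4) = 0 := by
        linear_combination h + (D*w1*w2*(w2 - w1)) * h3
      rcases mul_eq_zero.1 h1 with h' | h'
      · exact hne' h'
      · apply hsq
        refine ⟨w1 - w2, ?_⟩
        rw [div_eq_iff hden]
        linear_combination -h'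
    have surj := Finite.injective_iff_surjective.1 inj
    obtain ⟨w, hw⟩ := surj (-(a₂ ^ 3))
    simp only at hw
    have hroot : ∃ w : F, D * w ^ 3 - a₂ ^ 4 * w + a₂ ^ 3 = 0 :=
      ⟨w, by linear_combination hw⟩
    constructor
    · intro h
      exact absurd hroot h
    · rintro ⟨b, hb, _⟩
      exact absurd ⟨b, hb⟩ hsq
end

section
/- Let q = 3^s and let f ∈ F_q[X] be of the form f(X) = a₃X³ − a₁X − a₀ with a₃ ≠ 0. Then at least one of the polynomials f, f∘f, f∘f∘f is reducible over F_q. In particular, no such polynomial is stable over F_q. -/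
open Polynomial

/-- Over a finite field of characteristic 3, for `f = a₃ X³ - a₁ X - a₀` with `a₃ ≠ 0`,
the second iterate `f ∘ f` is never irreducible. -/
theorem aux_comp_not_irred_char3 (s : ℕ) (hs : 1 ≤ s)
    {F : Type*} [Field F] [Fintype F] (hcard : Fintype.card F = 3 ^ s)
    (a₀ a₁ a₃ : F) (ha₃ : a₃ ≠ 0) :
    ¬ Irreducible ((C a₃ * X ^ 3 - C a₁ * X - C a₀).comp
        (C a₃ * X ^ 3 - C a₁ * X - C a₀)) := by
  intro hg
  have h3 : Fact (Nat.Prime 3) := ⟨by norm_num⟩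
  have hcharF : CharP F 3 := by
    obtain ⟨p, hp⟩ := CharP.exists F
    haveI := hp
    obtain ⟨n, hprime, hc⟩ := FiniteField.card F p
    have hdvd : p ∣ 3 ^ s := by
      rw [← hcard, hc]
      exact dvd_pow_self p n.pos.ne'
    have hp3 : p = 3 := by
      have := hprime.dvd_of_dvd_pow hdvd
      exact (Nat.prime_dvd_prime_iff_eq hprime (by norm_num)).mp this
    exact hp3 ▸ hp
  haveI := hcharF
  set f : F[X] := C a₃ * X ^ 3 - C a₁ * X - C a₀ with hf
  set g : F[X] := f.comp f with hgdef
  have hdf : f.natDegree = 3 := by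
    rw [hf]
    compute_degree!
  have hdg : g.natDegree = 9 := by
    rw [hgdef, natDegree_comp, hdf]
  have hg0 : g ≠ 0 := hg.ne_zero
  haveI : Fact (Irreducible g) := ⟨hg⟩
  set E := AdjoinRoot g with hE
  haveI : CharP E 3 := charP_of_injective_algebraMap (algebraMap F E).injective 3
  set pb := AdjoinRoot.powerBasis hg0 with hpb
  haveI : Fintype E := Module.fintypeOfFintype pb.basis
  have hfinrank : Module.finrank F E = 9 := by
    rw [pb.finrank, AdjoinRoot.powerBasis_dim, hdg]
  have hcardE : Fintype.card E = 3 ^ (9 * s) := by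
    rw [Module.card_eq_pow_finrank (K := F) (V := E), hfinrank, hcard, ← pow_mul, mul_comm s 9]
  have hfixF : ∀ c : F, (algebraMap F E c) ^ (3 ^ s) = algebraMap F E c := by
    intro c
    rw [← map_pow]
    congr 1
    have := FiniteField.pow_card c
    rwa [hcard] at this
  -- notation
  set Q := 3 ^ s with hQ
  set A₀ := algebraMap F E a₀ with hA₀
  set A₁ := algebraMap F E a₁ with hA₁
  set A₃ := algebraMap F E a₃ with hA₃
  have hA₃0 : A₃ ≠ 0 := by
    simpa [hA₃] using ha₃
  have hadd : ∀ x y : E, (x + y) ^ Q = x ^ Q + y ^ Q := fun x y => add_pow_char_pow x y 3 s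
  have hsub : ∀ x y : E, (x - y) ^ Q = x ^ Q - y ^ Q := fun x y => sub_pow_char_pow x y s
  have h3E : (3 : E) = 0 := CharP.cast_eq_zero E 3
  -- the linearized map L
  set L : E → E := fun x => A₃ * x ^ 3 - A₁ * x with hL
  have hcube : ∀ x y : E, (x - y) ^ 3 = x ^ 3 - y ^ 3 := fun x y => sub_pow_char x y
  have hLsub : ∀ x y : E, L (x - y) = L x - L y := by
    intro x y
    simp only [hL]
    rw [hcube]
    ring
  have hLQ : ∀ x : E, (L x) ^ Q = L (x ^ Q) := by
    intro x
    simp only [hL]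
    rw [hsub, mul_pow, mul_pow, hfixF, hfixF, ← pow_mul, mul_comm 3 Q, pow_mul]
  -- the root
  set α := AdjoinRoot.root g with hα
  have hroot : (aeval (aeval α f) f) = 0 := by
    rw [← aeval_comp, ← hgdef]
    rw [hα, AdjoinRoot.aeval_eq, AdjoinRoot.mk_self]
  have haev : ∀ x : E, aeval x f = L x - A₀ := by
    intro x
    simp [hf, hL, hA₀, hA₁, hA₃]
  set β := aeval α f with hβ
  have hβval : β = L α - A₀ := haev α
  have hβeq : L β = A₀ := by
    have h0 := hroot
    rw [haev β] at h0
    exact sub_eq_zero.mp h0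
  have hLadd : ∀ x y : E, L (x + y) = L x + L y := by
    intro x y
    simp only [hL]
    rw [add_pow_char]
    ring
  have hLLα : L (L α) = A₀ + L A₀ := by
    have h1 : L α = β + A₀ := by rw [hβval]; ring
    rw [h1, hLadd, hβeq]
  set D := A₀ + L A₀ with hD
  have hDfix : D ^ Q = D := by
    rw [hD, hadd, hfixF, hLQ, hfixF]
  have hQne : Q ≠ 0 := by positivity
  set k := α ^ Q - α with hk
  set u := L k with hu
  have hLu : L u = 0 := by
    have e1 : u = L (α ^ Q) - L α := by rw [hu, hk, hLsub]
    have e2 : L u = L (L (α ^ Q)) - L (L α) := by rw [e1, hLsub]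
    rw [e2, ← hLQ, ← hLQ, hLLα, hDfix, sub_self]
  have hQ0 : ∀ x : E, x ^ Q = 0 → x = 0 := by
    intro x h
    exact pow_eq_zero_iff hQne |>.mp h
  have hker : ∀ x y : E, L x = 0 → L y = 0 → x = 0 ∨ y = 0 ∨ x = y ∨ x = -y := by
    intro x y hx hy
    by_cases hx0 : x = 0
    · exact Or.inl hx0
    by_cases hy0 : y = 0
    · exact Or.inr (Or.inl hy0)
    simp only [hL] at hx hy
    have hx2 : A₃ * x ^ 2 = A₁ := by
      have hfac : x * (A₃ * x ^ 2 - A₁) = 0 := by linear_combination hx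
      rcases mul_eq_zero.mp hfac with h | h
      · exact absurd h hx0
      · exact sub_eq_zero.mp h
    have hy2 : A₃ * y ^ 2 = A₁ := by
      have hfac : y * (A₃ * y ^ 2 - A₁) = 0 := by linear_combination hy
      rcases mul_eq_zero.mp hfac with h | h
      · exact absurd h hy0
      · exact sub_eq_zero.mp h
    have hxy : A₃ * ((x - y) * (x + y)) = 0 := by linear_combination hx2 - hy2
    have hxy2 : (x - y) * (x + y) = 0 := by
      rcases mul_eq_zero.mp hxy with h | h
      · exact absurd h hA₃0
      · exact h
    rcases mul_eq_zero.mp hxy2 with h | h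
    · exact Or.inr (Or.inr (Or.inl (sub_eq_zero.mp h)))
    · exact Or.inr (Or.inr (Or.inr (eq_neg_of_add_eq_zero_left h)))
  have key : ∃ ε w : E, ε ^ 2 = 1 ∧ k ^ Q = ε * k + w ∧ w ^ Q = ε * w := by
    by_cases hu0 : u = 0
    · have hLk : L k = 0 := by rw [← hu]; exact hu0
      have hLk' : L (k ^ Q) = 0 := by rw [← hLQ, hLk, zero_pow hQne]
      rcases hker k (k ^ Q) hLk hLk' with h | h | h | h
      · exact ⟨1, 0, by norm_num, by rw [h]; simp [zero_pow hQne], by simp [zero_pow hQne]⟩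
      · have hk0 : k = 0 := hQ0 k h
        exact ⟨1, 0, by norm_num, by rw [hk0]; simp [zero_pow hQne], by simp [zero_pow hQne]⟩
      · exact ⟨1, 0, by norm_num, by linear_combination -h, by simp [zero_pow hQne]⟩
      · exact ⟨-1, 0, by norm_num, by linear_combination h, by simp [zero_pow hQne]⟩
    · have hLuQ : L (u ^ Q) = 0 := by rw [← hLQ, hLu, zero_pow hQne]
      have hεu : ∃ ε : E, ε ^ 2 = 1 ∧ u ^ Q = ε * u := by
        rcases hker u (u ^ Q) hLu hLuQ with h | h | h | h
        · exact absurd h hu0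
        · exact absurd (hQ0 u h) hu0
        · exact ⟨1, by norm_num, by linear_combination -h⟩
        · exact ⟨-1, by norm_num, by linear_combination h⟩
      obtain ⟨ε, hε2, hφu⟩ := hεu
      have hLε : ∀ x : E, L (ε * x) = ε * L x := by
        intro x
        simp only [hL]
        linear_combination (A₃ * x ^ 3 * ε) * hε2
      set w := k ^ Q - ε * k with hw
      have hLw : L w = 0 := by
        rw [hw, hLsub, ← hLQ, hLε, ← hu, hφu, sub_self]
      have hkey1 : k ^ Q = ε * k + w := by rw [hw]; ring
      rcases hker w u hLw hLu with h | h | h | h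
      · exact ⟨ε, w, hε2, hkey1, by rw [h]; simp [zero_pow hQne]⟩
      · exact absurd h hu0
      · refine ⟨ε, w, hε2, hkey1, ?_⟩
        rw [h, hφu]
      · refine ⟨ε, w, hε2, hkey1, ?_⟩
        have hneg : (-u) ^ Q = -(u ^ Q) := by
          have h0 := hsub 0 u
          simpa [zero_pow hQne] using h0
        rw [h, hneg, hφu]
        ring
  obtain ⟨ε, w, hε2, hk1, hw1⟩ := key
  have hεQ : ε ^ Q = ε := by
    have hodd : Odd Q := Odd.pow (⟨1, by norm_num⟩ : Odd 3)
    obtain ⟨m, hm⟩ := hodd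
    calc ε ^ Q = ε ^ (2 * m + 1) := by rw [hm]
    _ = (ε ^ 2) ^ m * ε := by rw [pow_add, pow_mul, pow_one]
    _ = ε := by rw [hε2, one_pow, one_mul]
  have hk2 : (k ^ Q) ^ Q = k - ε * w := by
    rw [hk1, hadd, mul_pow, hεQ, hk1, hw1]
    linear_combination k * hε2 + ε * w * h3E
  have hk3 : ((k ^ Q) ^ Q) ^ Q = ε * k := by
    rw [hk2, hsub, mul_pow, hεQ, hk1, hw1]
    linear_combination (-w) * hε2
  have hk4 : (((k ^ Q) ^ Q) ^ Q) ^ Q = k + ε * w := by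
    rw [hk3, mul_pow, hεQ, hk1]
    linear_combination k * hε2
  have hk5 : ((((k ^ Q) ^ Q) ^ Q) ^ Q) ^ Q = ε * k - w := by
    rw [hk4, hadd, mul_pow, hεQ, hk1, hw1]
    linear_combination w * hε2 + w * h3E
  have e1 : α ^ Q = α + k := by rw [hk]; ring
  have e2 : (α + k) ^ Q = α + k + k ^ Q := by rw [hadd, e1]
  have e3 : (α + k + k ^ Q) ^ Q = α + k + k ^ Q + (k ^ Q) ^ Q := by rw [hadd, e2]
  have e4 : (α + k + k ^ Q + (k ^ Q) ^ Q) ^ Q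
      = α + k + k ^ Q + (k ^ Q) ^ Q + ((k ^ Q) ^ Q) ^ Q := by rw [hadd, e3]
  have e5 : (α + k + k ^ Q + (k ^ Q) ^ Q + ((k ^ Q) ^ Q) ^ Q) ^ Q
      = α + k + k ^ Q + (k ^ Q) ^ Q + ((k ^ Q) ^ Q) ^ Q + (((k ^ Q) ^ Q) ^ Q) ^ Q := by
    rw [hadd, e4]
  have e6 : (α + k + k ^ Q + (k ^ Q) ^ Q + ((k ^ Q) ^ Q) ^ Q + (((k ^ Q) ^ Q) ^ Q) ^ Q) ^ Q
      = α + k + k ^ Q + (k ^ Q) ^ Q + ((k ^ Q) ^ Q) ^ Q + (((k ^ Q) ^ Q) ^ Q) ^ Q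
        + ((((k ^ Q) ^ Q) ^ Q) ^ Q) ^ Q := by rw [hadd, e5]
  have etower : (((((α ^ Q) ^ Q) ^ Q) ^ Q) ^ Q) ^ Q = α := by
    rw [e1, e2, e3, e4, e5, e6]
    linear_combination hk1 + hk2 + hk3 + hk4 + hk5 + (k + ε * k) * h3E
  -- convert the tower to a single exponent
  have hQ6 : Q * Q * Q * Q * Q * Q = 3 ^ (s * 6) := by
    rw [hQ, ← pow_add, ← pow_add, ← pow_add, ← pow_add, ← pow_add]
    congr 1
    ring
  have htower : ∀ x : E, (((((x ^ Q) ^ Q) ^ Q) ^ Q) ^ Q) ^ Q = x ^ 3 ^ (s * 6) := by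
    intro x
    rw [← pow_mul, ← pow_mul, ← pow_mul, ← pow_mul, ← pow_mul]
    congr 1
    rw [hQ]
    ring
  have hαfix : α ^ 3 ^ (s * 6) = α := by rw [← htower α]; exact etower
  have hfixc : ∀ c : F, algebraMap F E c ^ 3 ^ (s * 6) = algebraMap F E c := by
    intro c
    rw [← hQ6, pow_mul, pow_mul, pow_mul, pow_mul, pow_mul]
    simp only [hfixF]
  haveI : ExpChar E 3 := inferInstance
  set ψ₀ := iterateFrobenius E 3 (s * 6) with hψ₀
  have hψdef : ∀ x : E, ψ₀ x = x ^ 3 ^ (s * 6) := by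
    intro x
    rw [hψ₀, iterateFrobenius_def]
  let ψ : E →ₐ[F] E :=
    { toRingHom := ψ₀
      commutes' := fun c => by show ψ₀ _ = _; rw [hψdef]; exact hfixc c }
  have hψid : ψ = AlgHom.id F E := by
    apply AdjoinRoot.algHom_ext
    show ψ₀ (AdjoinRoot.root g) = AdjoinRoot.root g
    rw [hψdef]
    exact hαfix
  have hall : ∀ x : E, x ^ 3 ^ (s * 6) = x := by
    intro x
    have hx : ψ x = AlgHom.id F E x := by rw [hψid]
    have hx2 : ψ₀ x = x := hx
    rw [hψdef] at hx2
    exact hx2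
  letI : DecidableEq E := Classical.decEq E
  obtain ⟨ζ, hζ⟩ := IsCyclic.exists_generator (α := Eˣ)
  have hordζ : orderOf ζ = Fintype.card Eˣ := by
    rw [orderOf_eq_card_of_forall_mem_zpowers hζ, Nat.card_eq_fintype_card]
  have hone : 1 ≤ 3 ^ (s * 6) := Nat.one_le_pow _ _ (by norm_num)
  have hζpow : ζ ^ 3 ^ (s * 6) = ζ := by
    have h1 : ((ζ : E)) ^ 3 ^ (s * 6) = (ζ : E) := hall ζ
    exact Units.ext (by push_cast; exact h1)
  have hζ1 : ζ ^ (3 ^ (s * 6) - 1) = 1 := by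
    have h2 : ζ ^ (3 ^ (s * 6) - 1) * ζ = 1 * ζ := by
      rw [← pow_succ, Nat.sub_add_cancel hone, hζpow, one_mul]
    exact mul_right_cancel h2
  have hdvd : Fintype.card Eˣ ∣ 3 ^ (s * 6) - 1 := hordζ ▸ orderOf_dvd_of_pow_eq_one hζ1
  have hcardU : Fintype.card Eˣ = 3 ^ (9 * s) - 1 := by rw [Fintype.card_units, hcardE]
  rw [hcardU] at hdvd
  have hlt1 : 1 < 3 ^ (s * 6) := Nat.one_lt_pow (by omega) (by norm_num)
  have hle := Nat.le_of_dvd (by omega) hdvd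
  have hlt : 3 ^ (s * 6) < 3 ^ (9 * s) := Nat.pow_lt_pow_right (by norm_num) (by omega)
  omega

/-- The n-th compositional iterate of a polynomial: f⁽⁰⁾ = X and f⁽ⁿ⁾ = f⁽ⁿ⁻¹⁾ ∘ f. -/
noncomputable def polyIter {K : Type*} [Field K] (f : K[X]) : ℕ → K[X]
  | 0 => Polynomial.X
  | n + 1 => (polyIter f n).comp f

/-- In characteristic 3, for f(X) = a₃X³ − a₁X − a₀ with a₃ ≠ 0, at least one of
f, f∘f, f∘f∘f is reducible over F_q; in particular f is not stable. -/
theorem cubic_not_stable_char_three (s : ℕ) (hs : 1 ≤ s)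
    {F : Type*} [Field F] [Fintype F] (hcard : Fintype.card F = 3 ^ s)
    (a₀ a₁ a₃ : F) (ha₃ : a₃ ≠ 0) :
    (¬ Irreducible (C a₃ * X ^ 3 - C a₁ * X - C a₀) ∨
      ¬ Irreducible ((C a₃ * X ^ 3 - C a₁ * X - C a₀).comp
          (C a₃ * X ^ 3 - C a₁ * X - C a₀)) ∨
      ¬ Irreducible (((C a₃ * X ^ 3 - C a₁ * X - C a₀).comp
          (C a₃ * X ^ 3 - C a₁ * X - C a₀)).comp
          (C a₃ * X ^ 3 - C a₁ * X - C a₀))) ∧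
      ¬ ∀ n : ℕ, 1 ≤ n → Irreducible (polyIter (C a₃ * X ^ 3 - C a₁ * X - C a₀) n) := by
  have hmain := aux_comp_not_irred_char3 s hs hcard a₀ a₁ a₃ ha₃
  constructor
  · exact Or.inr (Or.inl hmain)
  · intro hall
    have h2 := hall 2 (by norm_num)
    have hiter : polyIter (C a₃ * X ^ 3 - C a₁ * X - C a₀) 2
        = (C a₃ * X ^ 3 - C a₁ * X - C a₀).comp (C a₃ * X ^ 3 - C a₁ * X - C a₀) := by
      simp [polyIter]
    rw [hiter] at h2
    exact hmain h2
end
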